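/- arXiv:2602.15022 — 2 statements merged into one kernel-verified Lean document; each statement's English description precedes it below -/
import Mathlib

section
/- Let G be a compact group acting orthogonally on ℝ^d, let G ~ λ (Haar) be independent of the pair (Z̃₀, Z̃₁) of square-integrable ℝ^d-valued random vectors, and set Z_t = (1−t) G·Z̃₀ + t G·Z̃₁, Z̃_t = (1−t)Z̃₀ + tZ̃₁, U = G·(Z̃₁ − Z̃₀), Δ = Z̃₁ − Z̃₀ for fixed t ∈ [0,1]. Then Var(U | Z_t) = E[Var(Δ | Z̃_t) | Z_t] + Var(E[U | Z_t, G] | Z_t) almost surely, and consequently E[Var(U | Z_t)] ≥ E[Var(Δ | Z̃_t)]. -/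
open MeasureTheory ProbabilityTheory

section Aux

lemma aux_integrable_mul {α : Type*} {m0 : MeasurableSpace α} {μ : Measure α}
    {f g : α → ℝ} (hf : MemLp f 2 μ) (hg : MemLp g 2 μ) :
    Integrable (fun x => f x * g x) μ := by
  have h1 : Integrable
      (fun x => ((f x + g x) ^ 2 - f x ^ 2 - g x ^ 2) * (1 / 2)) μ :=
    (((hf.add hg).integrable_sq.sub hf.integrable_sq).sub hg.integrable_sq).mul_const _
  exact h1.congr (Filter.Eventually.of_forall fun x => by ring)

lemma aux_memℒp_condexp {α E : Type*} [NormedAddCommGroup E] [InnerProductSpace ℝ E]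
    [CompleteSpace E] {m m0 : MeasurableSpace α} {μ : Measure α} (hm : m ≤ m0)
    [IsFiniteMeasure μ] {f : α → E}
    (hf : MemLp f 2 μ) : MemLp (μ[f|m]) 2 μ := by
  have hfa : Integrable f μ := hf.integrable one_le_two
  have heq : (↑↑(condExpL2 E ℝ hm (hf.toLp f)) : α → E) =ᵐ[μ] μ[f|m] := by
    refine ae_eq_condExp_of_forall_setIntegral_eq hm hfa
      (fun s _ _ => ((Lp.memLp _).integrable one_le_two).integrableOn)
      (fun s hs hμs => ?_) (aestronglyMeasurable_condExpL2 hm _)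
    rw [integral_condExpL2_eq hm (hf.toLp f) hs hμs.ne]
    exact setIntegral_congr_ae (hm s hs) (hf.coeFn_toLp.mono fun x hx _ => hx)
  exact (Lp.memLp _).ae_eq heq

lemma aux_condexp_clm {α E F : Type*} [NormedAddCommGroup E] [NormedSpace ℝ E] [CompleteSpace E]
    [NormedAddCommGroup F] [NormedSpace ℝ F] [CompleteSpace F]
    {m m0 : MeasurableSpace α} {μ : Measure α} (hm : m ≤ m0) [SigmaFinite (μ.trim hm)]
    (T : E →L[ℝ] F) {f : α → E} (hf : Integrable f μ) :
    μ[fun a => T (f a)|m] =ᵐ[μ] fun a => T ((μ[f|m]) a) := by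
  refine (ae_eq_condExp_of_forall_setIntegral_eq hm (T.integrable_comp hf)
    (fun s _ _ => (T.integrable_comp integrable_condExp).integrableOn)
    (fun s hs hμs => ?_)
    ((T.continuous.comp_stronglyMeasurable stronglyMeasurable_condExp).aestronglyMeasurable)).symm
  rw [T.integral_comp_comm integrable_condExp.integrableOn,
    setIntegral_condExp hm hf hs, ← T.integral_comp_comm hf.integrableOn]

lemma aux_setIntegral_sup {α : Type*} {m₁ m₂ m0 : MeasurableSpace α} {μ : Measure α}
    (hm₁ : m₁ ≤ m0) (hm₂ : m₂ ≤ m0)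
    {f g : α → ℝ} (hf : Integrable f μ) (hg : Integrable g μ)
    (hbase : ∀ s₁, MeasurableSet[m₁] s₁ → ∀ s₂, MeasurableSet[m₂] s₂ →
      ∫ x in s₁ ∩ s₂, f x ∂μ = ∫ x in s₁ ∩ s₂, g x ∂μ) :
    ∀ s, MeasurableSet[m₁ ⊔ m₂] s → ∫ x in s, f x ∂μ = ∫ x in s, g x ∂μ := by
  have hsup : m₁ ⊔ m₂ ≤ m0 := sup_le hm₁ hm₂
  have hgen : (m₁ ⊔ m₂) = MeasurableSpace.generateFrom
      {s | ∃ s₁, MeasurableSet[m₁] s₁ ∧ ∃ s₂, MeasurableSet[m₂] s₂ ∧ s = s₁ ∩ s₂} := by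
    refine le_antisymm (sup_le ?_ ?_) (MeasurableSpace.generateFrom_le ?_)
    · exact fun s hs => MeasurableSpace.measurableSet_generateFrom
        ⟨s, hs, Set.univ, MeasurableSet.univ, (Set.inter_univ s).symm⟩
    · exact fun s hs => MeasurableSpace.measurableSet_generateFrom
        ⟨Set.univ, MeasurableSet.univ, s, hs, (Set.univ_inter s).symm⟩
    · rintro s ⟨s₁, h₁, s₂, h₂, rfl⟩
      exact MeasurableSet.inter ((le_sup_left : m₁ ≤ m₁ ⊔ m₂) _ h₁)
        ((le_sup_right : m₂ ≤ m₁ ⊔ m₂) _ h₂)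
  have hPi : IsPiSystem
      {s : Set α | ∃ s₁, MeasurableSet[m₁] s₁ ∧ ∃ s₂, MeasurableSet[m₂] s₂ ∧ s = s₁ ∩ s₂} := by
    rintro s ⟨s₁, h₁, s₂, h₂, rfl⟩ u ⟨u₁, hu₁, u₂, hu₂, rfl⟩ -
    exact ⟨s₁ ∩ u₁, h₁.inter hu₁, s₂ ∩ u₂, h₂.inter hu₂, Set.inter_inter_inter_comm s₁ s₂ u₁ u₂⟩
  intro s hs
  refine MeasurableSpace.induction_on_inter (m := m₁ ⊔ m₂)
    (C := fun s _ => ∫ x in s, f x ∂μ = ∫ x in s, g x ∂μ) hgen hPi (by simp) ?_ ?_ ?_ s hs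
  · rintro u ⟨s₁, h₁, s₂, h₂, rfl⟩
    exact hbase s₁ h₁ s₂ h₂
  · intro u hu h
    have h1 := integral_add_compl (μ := μ) (hsup _ hu) hf
    have h2 := integral_add_compl (μ := μ) (hsup _ hu) hg
    have h3 : ∫ x, f x ∂μ = ∫ x, g x ∂μ := by
      have := hbase Set.univ MeasurableSet.univ Set.univ MeasurableSet.univ
      simpa using this
    linarith
  · intro k hdisj hmeas hC
    rw [integral_iUnion (μ := μ) (fun i => hsup _ (hmeas i)) hdisj hf.integrableOn,
      integral_iUnion (μ := μ) (fun i => hsup _ (hmeas i)) hdisj hg.integrableOn]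
    exact tsum_congr hC

lemma aux_condexp_sup_indep {α : Type*} {m mA m₂ m0 : MeasurableSpace α} {μ : Measure α}
    [IsProbabilityMeasure μ]
    (hmA : mA ≤ m0) (hm₂ : m₂ ≤ m0) (hm : m ≤ mA) {f : α → ℝ}
    (hfm : StronglyMeasurable[mA] f) (hf : Integrable f μ)
    (hindep : Indep mA m₂ μ) :
    μ[f | m ⊔ m₂] =ᵐ[μ] μ[f|m] := by
  have hm0 : m ≤ m0 := hm.trans hmA
  have hsup : m ⊔ m₂ ≤ m0 := sup_le hm0 hm₂
  refine (ae_eq_condExp_of_forall_setIntegral_eq hsup hf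
    (fun s _ _ => integrable_condExp.integrableOn) (fun s hs _ => ?_)
    (((stronglyMeasurable_condExp (m := m) (μ := μ) (f := f)).mono (le_sup_left : m ≤ m ⊔ m₂)).aestronglyMeasurable)).symm
  refine aux_setIntegral_sup hm0 hm₂ integrable_condExp hf (fun s₁ h₁ s₂ h₂ => ?_) s hs
  have key : ∀ h : α → ℝ, StronglyMeasurable[mA] h → Integrable h μ →
      ∫ x in s₁ ∩ s₂, h x ∂μ = (μ s₂).toReal • ∫ x, s₁.indicator h x ∂μ := by
    intro h hhm hhint
    have h₁0 : MeasurableSet[m0] s₁ := hm0 _ h₁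
    have hhm' : StronglyMeasurable[mA] (s₁.indicator h) := hhm.indicator (hm _ h₁)
    have hhint' : Integrable (s₁.indicator h) μ := hhint.indicator h₁0
    have hce := condExp_indep_eq hmA hm₂ hhm' hindep
    calc ∫ x in s₁ ∩ s₂, h x ∂μ = ∫ x in s₂ ∩ s₁, h x ∂μ := by rw [Set.inter_comm]
      _ = ∫ x in s₂, s₁.indicator h x ∂μ := (setIntegral_indicator h₁0).symm
      _ = ∫ x in s₂, (μ[s₁.indicator h|m₂]) x ∂μ := (setIntegral_condExp hm₂ hhint' h₂).symm
      _ = ∫ _ in s₂, (∫ x, s₁.indicator h x ∂μ) ∂μ :=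
          integral_congr_ae (ae_restrict_of_ae hce)
      _ = (μ s₂).toReal • ∫ x, s₁.indicator h x ∂μ := setIntegral_const _
  rw [key _ (stronglyMeasurable_condExp.mono hm) integrable_condExp, key _ hfm hf]
  congr 1
  rw [integral_indicator (hm0 _ h₁), integral_indicator (hm0 _ h₁),
    setIntegral_condExp hm0 hf h₁]

end Aux

set_option maxHeartbeats 1000000 in
/-- variance decomposition under the group-aligned lift. With
`G ~ λ` (Haar, i.e. left-invariant probability on a compact group) independent
of the square-integrable pair `(Z̃₀, Z̃₁)`, `Z_t = (1−t)G⬝Z̃₀ + tG⬝Z̃₁`,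
`Z̃_t = (1−t)Z̃₀ + tZ̃₁`, `U = G⬝(Z̃₁−Z̃₀)`, `Δ = Z̃₁−Z̃₀`, one has a.s.
`Var(U|Z_t) = E[Var(Δ|Z̃_t)|Z_t] + Var(E[U|Z_t,G]|Z_t)`, and consequently
`E[Var(U|Z_t)] ≥ E[Var(Δ|Z̃_t)]`. -/
theorem stmt9 {Ω : Type*} {mΩ : MeasurableSpace Ω} (μ : Measure Ω) [IsProbabilityMeasure μ]
    {d : ℕ} {𝒢 : Type*} [Group 𝒢] [TopologicalSpace 𝒢] [IsTopologicalGroup 𝒢]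
    [CompactSpace 𝒢] [MeasurableSpace 𝒢] [BorelSpace 𝒢]
    (lam : Measure 𝒢) [IsProbabilityMeasure lam] [lam.IsMulLeftInvariant]
    (ρ : 𝒢 →* (EuclideanSpace ℝ (Fin d) ≃ₗᵢ[ℝ] EuclideanSpace ℝ (Fin d)))
    (hρcont : Continuous fun p : 𝒢 × EuclideanSpace ℝ (Fin d) => ρ p.1 p.2)
    (Grv : Ω → 𝒢) (hGrv : Measurable Grv) (hGlaw : Measure.map Grv μ = lam)
    (Zt0 Zt1 : Ω → EuclideanSpace ℝ (Fin d))
    (hZt0m : Measurable Zt0) (hZt1m : Measurable Zt1)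
    (hZt0 : MemLp Zt0 2 μ) (hZt1 : MemLp Zt1 2 μ)
    (hindep : IndepFun Grv (fun ω => (Zt0 ω, Zt1 ω)) μ)
    (t : ℝ) (ht : t ∈ Set.Icc (0 : ℝ) 1)
    (Zt Ztil U Δ : Ω → EuclideanSpace ℝ (Fin d))
    (hZt : ∀ ω, Zt ω = (1 - t) • ρ (Grv ω) (Zt0 ω) + t • ρ (Grv ω) (Zt1 ω))
    (hZtil : ∀ ω, Ztil ω = (1 - t) • Zt0 ω + t • Zt1 ω)
    (hU : ∀ ω, U ω = ρ (Grv ω) (Zt1 ω - Zt0 ω))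
    (hΔ : ∀ ω, Δ ω = Zt1 ω - Zt0 ω)
    (mZt mZtG mZtil : MeasurableSpace Ω)
    (hmZt : mZt = MeasurableSpace.comap Zt inferInstance)
    (hmZtG : mZtG = MeasurableSpace.comap Zt inferInstance
      ⊔ MeasurableSpace.comap Grv inferInstance)
    (hmZtil : mZtil = MeasurableSpace.comap Ztil inferInstance) :
    (μ[fun ω => ‖U ω - (μ[U | mZt]) ω‖ ^ 2 | mZt]
      =ᵐ[μ] fun ω =>
        (μ[μ[fun ω' => ‖Δ ω' - (μ[Δ | mZtil]) ω'‖ ^ 2 | mZtil] | mZt]) ω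
        + (μ[fun ω' => ‖(μ[U | mZtG]) ω' - (μ[U | mZt]) ω'‖ ^ 2 | mZt]) ω) ∧
    ∫ ω, ‖Δ ω - (μ[Δ | mZtil]) ω‖ ^ 2 ∂μ ≤ ∫ ω, ‖U ω - (μ[U | mZt]) ω‖ ^ 2 ∂μ := by
  classical
  letI : MeasurableSpace Ω := mΩ
  have hρmeas : Measurable fun p : 𝒢 × EuclideanSpace ℝ (Fin d) => ρ p.1 p.2 := hρcont.measurable
  have hZtileq : Ztil = fun ω => (1 - t) • Zt0 ω + t • Zt1 ω := funext hZtil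
  have hΔeq : Δ = fun ω => Zt1 ω - Zt0 ω := funext hΔ
  have hZtilm : Measurable[mΩ] Ztil := by
    rw [hZtileq]; exact (hZt0m.const_smul (1 - t)).add (hZt1m.const_smul t)
  have hΔm : Measurable[mΩ] Δ := by rw [hΔeq]; exact hZt1m.sub hZt0m
  have hUm : Measurable[mΩ] U := by
    rw [funext hU]; exact hρmeas.comp (hGrv.prodMk (hZt1m.sub hZt0m))
  have hZtalt : Zt = fun ω => ρ (Grv ω) (Ztil ω) := by
    funext ω; rw [hZt ω, hZtil ω]; simp [map_add, _root_.map_smul]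
  have hZtm : Measurable[mΩ] Zt := by rw [hZtalt]; exact hρmeas.comp (hGrv.prodMk hZtilm)
  have hρinv : ∀ (g : 𝒢) (x : EuclideanSpace ℝ (Fin d)), ρ g⁻¹ (ρ g x) = x := by
    intro g x
    have h1 : ρ g⁻¹ * ρ g = 1 := by rw [← map_mul, inv_mul_cancel, map_one]
    calc ρ g⁻¹ (ρ g x) = (ρ g⁻¹ * ρ g) x := rfl
      _ = x := by rw [h1]; rfl
  have hZtilalt : Ztil = fun ω => ρ ((Grv ω)⁻¹) (Zt ω) := by
    funext ω; rw [hZtalt]; exact (hρinv _ _).symm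
  -- σ-algebra facts
  have hmZt0' : mZt ≤ mΩ := by rw [hmZt]; exact hZtm.comap_le
  have hmT0 : mZtil ≤ mΩ := by rw [hmZtil]; exact hZtilm.comap_le
  have hmG0 : mZtG ≤ mΩ := by rw [hmZtG]; exact sup_le hZtm.comap_le hGrv.comap_le
  have hmZtG' : mZt ≤ mZtG := by rw [hmZt, hmZtG]; exact le_sup_left
  have hmGsup : mZtG = mZtil ⊔ MeasurableSpace.comap Grv inferInstance := by
    rw [hmZtG, hmZtil]
    refine le_antisymm (sup_le ?_ le_sup_right) (sup_le ?_ le_sup_right)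
    · rw [hZtalt]
      exact Measurable.comap_le (hρmeas.comp
        ((Measurable.of_comap_le le_sup_right).prodMk (Measurable.of_comap_le le_sup_left)))
    · rw [hZtilalt]
      exact Measurable.comap_le (hρmeas.comp
        (((Measurable.of_comap_le le_sup_right).inv).prodMk (Measurable.of_comap_le le_sup_left)))
  have hmGsup0 : mZtil ⊔ MeasurableSpace.comap Grv inferInstance ≤ mΩ := hmGsup ▸ hmG0
  -- pair σ-algebra
  have hpairm : Measurable[mΩ] fun ω => (Zt0 ω, Zt1 ω) := hZt0m.prodMk hZt1m
  have hmP0 : MeasurableSpace.comap (fun ω => (Zt0 ω, Zt1 ω)) inferInstance ≤ mΩ :=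
    hpairm.comap_le
  have hZt0P : Measurable[MeasurableSpace.comap (fun ω => (Zt0 ω, Zt1 ω)) inferInstance] Zt0 :=
    measurable_fst.comp (Measurable.of_comap_le le_rfl)
  have hZt1P : Measurable[MeasurableSpace.comap (fun ω => (Zt0 ω, Zt1 ω)) inferInstance] Zt1 :=
    measurable_snd.comp (Measurable.of_comap_le le_rfl)
  have hmTP : mZtil ≤ MeasurableSpace.comap (fun ω => (Zt0 ω, Zt1 ω)) inferInstance := by
    rw [hmZtil]
    refine Measurable.comap_le ?_
    rw [hZtileq]
    exact (hZt0P.const_smul (1 - t)).add (hZt1P.const_smul t)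
  have hΔP : Measurable[MeasurableSpace.comap (fun ω => (Zt0 ω, Zt1 ω)) inferInstance] Δ := by
    rw [hΔeq]; exact hZt1P.sub hZt0P
  have hIndep : Indep (MeasurableSpace.comap (fun ω => (Zt0 ω, Zt1 ω)) inferInstance)
      (MeasurableSpace.comap Grv inferInstance) μ :=
    (IndepFun_iff_Indep _ _ _).mp hindep.symm
  -- MemLp facts
  have hΔ2 : MemLp Δ 2 μ := by rw [hΔeq]; exact hZt1.sub hZt0
  have hU2 : MemLp U 2 μ := by
    refine hΔ2.of_le hUm.aestronglyMeasurable (Filter.Eventually.of_forall fun ω => ?_)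
    rw [hU ω, hΔ ω, LinearIsometryEquiv.norm_map]
  have hΔint : Integrable Δ μ := hΔ2.integrable one_le_two
  have hUint : Integrable U μ := hU2.integrable one_le_two
  have hD2 : MemLp (μ[Δ|mZtil]) 2 μ := aux_memℒp_condexp hmT0 hΔ2
  have hEU2 : MemLp (μ[U|mZtG]) 2 μ := aux_memℒp_condexp hmG0 hU2
  have hEUm2 : MemLp (μ[U|mZt]) 2 μ := aux_memℒp_condexp hmZt0' hU2
  have hDint : Integrable (μ[Δ|mZtil]) μ := integrable_condExp
  -- coordinates
  have hsingle : ∀ x : EuclideanSpace ℝ (Fin d),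
      x = ∑ j, x j • EuclideanSpace.single j (1 : ℝ) := by
    intro x
    refine PiLp.ext fun k => ?_
    rw [WithLp.ofLp_sum, Finset.sum_apply]
    simp [EuclideanSpace.single_apply]
  have hexp : ∀ (g : 𝒢) (x : EuclideanSpace ℝ (Fin d)) (i : Fin d),
      ρ g x i = ∑ j, ρ g (EuclideanSpace.single j (1 : ℝ)) i * x j := by
    intro g x i
    conv_lhs => rw [hsingle x, map_sum]
    rw [WithLp.ofLp_sum, Finset.sum_apply]
    refine Finset.sum_congr rfl fun j _ => ?_
    rw [LinearIsometryEquiv.map_smul]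
    simp [mul_comm]
  have hφbd : ∀ (i j : Fin d) (g : 𝒢), ‖ρ g (EuclideanSpace.single j (1 : ℝ)) i‖ ≤ 1 := by
    intro i j g
    have h1 : (inner ℝ (EuclideanSpace.single i (1 : ℝ)) (ρ g (EuclideanSpace.single j (1 : ℝ))) : ℝ)
        = ρ g (EuclideanSpace.single j (1 : ℝ)) i := by
      rw [EuclideanSpace.inner_single_left]; simp
    rw [Real.norm_eq_abs, ← h1]
    calc |(inner ℝ (EuclideanSpace.single i (1 : ℝ)) (ρ g (EuclideanSpace.single j (1 : ℝ))) : ℝ)|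
        ≤ ‖EuclideanSpace.single i (1 : ℝ)‖ * ‖ρ g (EuclideanSpace.single j (1 : ℝ))‖ :=
          abs_real_inner_le_norm _ _
      _ ≤ 1 := by rw [LinearIsometryEquiv.norm_map, EuclideanSpace.norm_single,
            EuclideanSpace.norm_single]; simp
  have hφcont : ∀ (i j : Fin d), Continuous fun g : 𝒢 =>
      ρ g (EuclideanSpace.single j (1 : ℝ)) i := by
    intro i j
    exact (EuclideanSpace.proj i).continuous.comp
      (hρcont.comp (continuous_id.prodMk continuous_const))
  have hφm : ∀ (i j : Fin d), Measurable[MeasurableSpace.comap Grv inferInstance]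
      fun ω : Ω => ρ (Grv ω) (EuclideanSpace.single j (1 : ℝ)) i := by
    intro i j
    exact ((hφcont i j).measurable).comp (Measurable.of_comap_le le_rfl)
  have hΔj2 : ∀ j : Fin d, MemLp (fun ω => Δ ω j) 2 μ := by
    intro j
    have := (EuclideanSpace.proj (𝕜 := ℝ) j).comp_memLp' hΔ2
    simpa [Function.comp_def] using this
  have hΔjint : ∀ j : Fin d, Integrable (fun ω => Δ ω j) μ :=
    fun j => (hΔj2 j).integrable one_le_two
  have hΔjP : ∀ j : Fin d, StronglyMeasurable[MeasurableSpace.comap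
      (fun ω => (Zt0 ω, Zt1 ω)) inferInstance] (fun ω => Δ ω j) := by
    intro j
    exact (((EuclideanSpace.proj j).continuous.measurable).comp hΔP).stronglyMeasurable
  have hDj : ∀ j : Fin d, μ[(fun ω => Δ ω j)|mZtil] =ᵐ[μ] fun ω => (μ[Δ|mZtil]) ω j := by
    intro j
    have := aux_condexp_clm hmT0 (EuclideanSpace.proj j) hΔint
    simpa [Function.comp] using this
  have hVint : Integrable (fun ω => ρ (Grv ω) ((μ[Δ|mZtil]) ω)) μ := by
    refine hDint.mono ?_ (Filter.Eventually.of_forall fun ω => by simp)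
    exact (hρmeas.comp (hGrv.prodMk
      ((stronglyMeasurable_condExp.mono hmT0).measurable))).aestronglyMeasurable
  have hC : μ[U | mZtil ⊔ MeasurableSpace.comap Grv inferInstance]
      =ᵐ[μ] fun ω => ρ (Grv ω) ((μ[Δ|mZtil]) ω) := by
    refine (ae_eq_condExp_of_forall_setIntegral_eq hmGsup0 hUint
      (fun s _ _ => hVint.integrableOn) (fun s hs _ => ?_) ?_).symm
    swap
    · refine StronglyMeasurable.aestronglyMeasurable (Measurable.stronglyMeasurable ?_)
      exact hρmeas.comp ((Measurable.of_comap_le le_sup_right).prodMk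
        ((stronglyMeasurable_condExp.measurable).mono le_sup_left le_rfl))
    have hcoord : ∀ (W : Ω → EuclideanSpace ℝ (Fin d)), Integrable W μ → ∀ i : Fin d,
        (∫ x in s, W x ∂μ) i = ∫ x in s, W x i ∂μ := by
      intro W hW i
      have := (EuclideanSpace.proj i).integral_comp_comm (μ := μ.restrict s) hW.integrableOn
      simpa using this.symm
    refine PiLp.ext fun i => ?_
    rw [hcoord _ hVint i, hcoord _ hUint i]
    have hkey : ∀ j : Fin d,
        ∫ x in s, ρ (Grv x) (EuclideanSpace.single j (1 : ℝ)) i * Δ x j ∂μ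
        = ∫ x in s, ρ (Grv x) (EuclideanSpace.single j (1 : ℝ)) i * (μ[Δ|mZtil]) x j ∂μ := by
      intro j
      have hφaesm : AEStronglyMeasurable
          (fun ω : Ω => ρ (Grv ω) (EuclideanSpace.single j (1 : ℝ)) i) μ :=
        (((hφcont i j).measurable).comp hGrv).aestronglyMeasurable
      have hmulint : Integrable
          (fun ω => ρ (Grv ω) (EuclideanSpace.single j (1 : ℝ)) i * Δ ω j) μ :=
        (hΔjint j).bdd_mul hφaesm (Filter.Eventually.of_forall fun ω => hφbd i j (Grv ω))
      have hφsm : StronglyMeasurable[mZtil ⊔ MeasurableSpace.comap Grv inferInstance]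
          (fun ω : Ω => ρ (Grv ω) (EuclideanSpace.single j (1 : ℝ)) i) :=
        (((hφm i j)).mono (le_sup_right (a := mZtil)) le_rfl).stronglyMeasurable
      have hpull := condExp_mul_of_stronglyMeasurable_left (μ := μ) hφsm hmulint (hΔjint j)
      have henl := aux_condexp_sup_indep hmP0 hGrv.comap_le hmTP (hΔjP j) (hΔjint j) hIndep
      have hae : μ[(fun ω => ρ (Grv ω) (EuclideanSpace.single j (1 : ℝ)) i * Δ ω j)
            | mZtil ⊔ MeasurableSpace.comap Grv inferInstance]
          =ᵐ[μ] fun ω => ρ (Grv ω) (EuclideanSpace.single j (1 : ℝ)) i * (μ[Δ|mZtil]) ω j := by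
        refine hpull.trans ?_
        filter_upwards [henl.trans (hDj j)] with ω hω
        simp only [Pi.mul_apply]
        rw [hω]
      calc ∫ x in s, ρ (Grv x) (EuclideanSpace.single j (1 : ℝ)) i * Δ x j ∂μ
          = ∫ x in s, (μ[(fun ω => ρ (Grv ω) (EuclideanSpace.single j (1 : ℝ)) i * Δ ω j)
              | mZtil ⊔ MeasurableSpace.comap Grv inferInstance]) x ∂μ :=
            (setIntegral_condExp hmGsup0 hmulint hs).symm
        _ = ∫ x in s, ρ (Grv x) (EuclideanSpace.single j (1 : ℝ)) i * (μ[Δ|mZtil]) x j ∂μ :=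
            integral_congr_ae (ae_restrict_of_ae hae)
    calc ∫ x in s, ρ (Grv x) ((μ[Δ|mZtil]) x) i ∂μ
        = ∫ x in s, ∑ j, ρ (Grv x) (EuclideanSpace.single j (1 : ℝ)) i * (μ[Δ|mZtil]) x j ∂μ := by
          refine integral_congr_ae (Filter.Eventually.of_forall fun x => ?_)
          exact hexp _ _ i
      _ = ∑ j, ∫ x in s, ρ (Grv x) (EuclideanSpace.single j (1 : ℝ)) i * (μ[Δ|mZtil]) x j ∂μ := by
          refine integral_finset_sum _ fun j _ => ?_
          refine Integrable.integrableOn ?_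
          have hDjint : Integrable (fun ω => (μ[Δ|mZtil]) ω j) μ := by
            have := (EuclideanSpace.proj (𝕜 := ℝ) j).comp_memLp' hD2
            exact (by simpa [Function.comp_def] using this :
              MemLp (fun ω => (μ[Δ|mZtil]) ω j) 2 μ).integrable one_le_two
          exact hDjint.bdd_mul ((((hφcont i j).measurable).comp hGrv).aestronglyMeasurable)
            (Filter.Eventually.of_forall fun ω => hφbd i j (Grv ω))
      _ = ∑ j, ∫ x in s, ρ (Grv x) (EuclideanSpace.single j (1 : ℝ)) i * Δ x j ∂μ :=
          Finset.sum_congr rfl fun j _ => (hkey j).symm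
      _ = ∫ x in s, ∑ j, ρ (Grv x) (EuclideanSpace.single j (1 : ℝ)) i * Δ x j ∂μ := by
          refine (integral_finset_sum _ fun j _ => ?_).symm
          exact ((hΔjint j).bdd_mul ((((hφcont i j).measurable).comp hGrv).aestronglyMeasurable)
            (Filter.Eventually.of_forall fun ω => hφbd i j (Grv ω))).integrableOn
      _ = ∫ x in s, U x i ∂μ := by
          refine integral_congr_ae (Filter.Eventually.of_forall fun x => ?_)
          dsimp only
          rw [hU x, show Zt1 x - Zt0 x = Δ x from (hΔ x).symm]
          exact (hexp _ _ i).symm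
  have hC' : μ[U|mZtG] =ᵐ[μ] fun ω => ρ (Grv ω) ((μ[Δ|mZtil]) ω) := by
    rw [hmGsup]; exact hC
  have hCsq : (fun ω => ‖U ω - (μ[U|mZtG]) ω‖ ^ 2)
      =ᵐ[μ] fun ω => ‖Δ ω - (μ[Δ|mZtil]) ω‖ ^ 2 := by
    filter_upwards [hC'] with ω hω
    rw [hω, hU ω, show Zt1 ω - Zt0 ω = Δ ω from (hΔ ω).symm, ← LinearIsometryEquiv.map_sub,
      LinearIsometryEquiv.norm_map]
  have hXint : Integrable (fun ω => ‖Δ ω - (μ[Δ|mZtil]) ω‖ ^ 2) μ := by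
    have h2 : MemLp (fun ω => Δ ω - (μ[Δ|mZtil]) ω) 2 μ := hΔ2.sub hD2
    exact (memLp_two_iff_integrable_sq_norm h2.aestronglyMeasurable).mp h2
  have hXsm : StronglyMeasurable[MeasurableSpace.comap (fun ω => (Zt0 ω, Zt1 ω)) inferInstance]
      (fun ω => ‖Δ ω - (μ[Δ|mZtil]) ω‖ ^ 2) := by
    have h1 : StronglyMeasurable[MeasurableSpace.comap (fun ω => (Zt0 ω, Zt1 ω)) inferInstance]
        Δ := hΔP.stronglyMeasurable
    have h2 := (stronglyMeasurable_condExp (μ := μ) (f := Δ) (m := mZtil)).mono hmTP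
    exact (h1.sub h2).norm.pow _
  have hE : μ[(fun ω => ‖Δ ω - (μ[Δ|mZtil]) ω‖ ^ 2)|mZtG]
      =ᵐ[μ] μ[(fun ω => ‖Δ ω - (μ[Δ|mZtil]) ω‖ ^ 2)|mZtil] := by
    rw [hmGsup]
    exact aux_condexp_sup_indep hmP0 hGrv.comap_le hmTP hXsm hXint hIndep
  have hUi2 : ∀ i : Fin d, MemLp (fun ω => U ω i) 2 μ := fun i => by
    simpa [Function.comp_def] using (EuclideanSpace.proj (𝕜 := ℝ) i).comp_memLp' hU2
  have hEUi2 : ∀ i : Fin d, MemLp (fun ω => (μ[U|mZtG]) ω i) 2 μ := fun i => by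
    simpa [Function.comp_def] using (EuclideanSpace.proj (𝕜 := ℝ) i).comp_memLp' hEU2
  have hEUmi2 : ∀ i : Fin d, MemLp (fun ω => (μ[U|mZt]) ω i) 2 μ := fun i => by
    simpa [Function.comp_def] using (EuclideanSpace.proj (𝕜 := ℝ) i).comp_memLp' hEUm2
  have hterm : ∀ i : Fin d, μ[(fun ω => (U ω i - (μ[U|mZtG]) ω i)
      * ((μ[U|mZtG]) ω i - (μ[U|mZt]) ω i))|mZt] =ᵐ[μ] 0 := by
    intro i
    have hAi2 : MemLp (fun ω => U ω i - (μ[U|mZtG]) ω i) 2 μ := (hUi2 i).sub (hEUi2 i)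
    have hBi2 : MemLp (fun ω => (μ[U|mZtG]) ω i - (μ[U|mZt]) ω i) 2 μ :=
      (hEUi2 i).sub (hEUmi2 i)
    have hAiint := hAi2.integrable one_le_two
    have hBAint : Integrable (fun ω => ((μ[U|mZtG]) ω i - (μ[U|mZt]) ω i)
        * (U ω i - (μ[U|mZtG]) ω i)) μ := aux_integrable_mul hBi2 hAi2
    have hBsm : StronglyMeasurable[mZtG] (fun ω => (μ[U|mZtG]) ω i - (μ[U|mZt]) ω i) := by
      have h1 : StronglyMeasurable[mZtG] (μ[U|mZtG]) := stronglyMeasurable_condExp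
      have h2 : StronglyMeasurable[mZtG] (μ[U|mZt]) := stronglyMeasurable_condExp.mono hmZtG'
      exact ((EuclideanSpace.proj (𝕜 := ℝ) i).continuous.comp_stronglyMeasurable h1).sub
        ((EuclideanSpace.proj (𝕜 := ℝ) i).continuous.comp_stronglyMeasurable h2)
    have hpull := condExp_mul_of_stronglyMeasurable_left (μ := μ) hBsm hBAint hAiint
    have hUi : μ[(fun ω => U ω i)|mZtG] =ᵐ[μ] fun ω => (μ[U|mZtG]) ω i := by
      simpa [Function.comp] using aux_condexp_clm hmG0 (EuclideanSpace.proj (𝕜 := ℝ) i) hUint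
    have hEUi : μ[(fun ω => (μ[U|mZtG]) ω i)|mZtG] = fun ω => (μ[U|mZtG]) ω i :=
      condExp_of_stronglyMeasurable hmG0
        ((EuclideanSpace.proj (𝕜 := ℝ) i).continuous.comp_stronglyMeasurable
          stronglyMeasurable_condExp) ((hEUi2 i).integrable one_le_two)
    have hAi0 : μ[(fun ω => U ω i - (μ[U|mZtG]) ω i)|mZtG] =ᵐ[μ] 0 := by
      refine (condExp_sub ((hUi2 i).integrable one_le_two)
        ((hEUi2 i).integrable one_le_two) mZtG).trans ?_
      filter_upwards [hUi] with ω hω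
      have h3 := congrFun hEUi ω
      simp only [Pi.sub_apply, Pi.zero_apply]
      rw [hω, h3, sub_self]
    have hzero : μ[(fun ω => ((μ[U|mZtG]) ω i - (μ[U|mZt]) ω i)
        * (U ω i - (μ[U|mZtG]) ω i))|mZtG] =ᵐ[μ] 0 := by
      refine hpull.trans ?_
      filter_upwards [hAi0] with ω hω
      simp only [Pi.mul_apply, Pi.zero_apply] at *
      rw [hω, mul_zero]
    calc μ[(fun ω => (U ω i - (μ[U|mZtG]) ω i) * ((μ[U|mZtG]) ω i - (μ[U|mZt]) ω i))|mZt]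
        =ᵐ[μ] μ[(fun ω => ((μ[U|mZtG]) ω i - (μ[U|mZt]) ω i) * (U ω i - (μ[U|mZtG]) ω i))|mZt] :=
          condExp_congr_ae (Filter.Eventually.of_forall fun ω => mul_comm _ _)
      _ =ᵐ[μ] μ[μ[(fun ω => ((μ[U|mZtG]) ω i - (μ[U|mZt]) ω i)
            * (U ω i - (μ[U|mZtG]) ω i))|mZtG]|mZt] := (condExp_condExp_of_le hmZtG' hmG0).symm
      _ =ᵐ[μ] μ[(0 : Ω → ℝ)|mZt] := condExp_congr_ae hzero
      _ =ᵐ[μ] 0 := by rw [condExp_zero]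
  have hA2 : MemLp (fun ω => U ω - (μ[U|mZtG]) ω) 2 μ := hU2.sub hEU2
  have hB2 : MemLp (fun ω => (μ[U|mZtG]) ω - (μ[U|mZt]) ω) 2 μ := hEU2.sub hEUm2
  have hN2 : MemLp (fun ω => U ω - (μ[U|mZt]) ω) 2 μ := hU2.sub hEUm2
  have hAsqint : Integrable (fun ω => ‖U ω - (μ[U|mZtG]) ω‖ ^ 2) μ :=
    (memLp_two_iff_integrable_sq_norm hA2.aestronglyMeasurable).mp hA2
  have hBsqint : Integrable (fun ω => ‖(μ[U|mZtG]) ω - (μ[U|mZt]) ω‖ ^ 2) μ :=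
    (memLp_two_iff_integrable_sq_norm hB2.aestronglyMeasurable).mp hB2
  have hNint : Integrable (fun ω => ‖U ω - (μ[U|mZt]) ω‖ ^ 2) μ :=
    (memLp_two_iff_integrable_sq_norm hN2.aestronglyMeasurable).mp hN2
  have hipint : Integrable (fun ω => (inner ℝ (U ω - (μ[U|mZtG]) ω)
      ((μ[U|mZtG]) ω - (μ[U|mZt]) ω) : ℝ)) μ := by
    refine Integrable.mono' (aux_integrable_mul hA2.norm hB2.norm)
      (hA2.aestronglyMeasurable.inner hB2.aestronglyMeasurable)
      (Filter.Eventually.of_forall fun ω => ?_)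
    rw [Real.norm_eq_abs]
    exact abs_real_inner_le_norm _ _
  have hIP : μ[(fun ω => (inner ℝ (U ω - (μ[U|mZtG]) ω)
      ((μ[U|mZtG]) ω - (μ[U|mZt]) ω) : ℝ))|mZt] =ᵐ[μ] 0 := by
    have hsum : (fun ω => (inner ℝ (U ω - (μ[U|mZtG]) ω) ((μ[U|mZtG]) ω - (μ[U|mZt]) ω) : ℝ))
        = ∑ i : Fin d, fun ω => (U ω i - (μ[U|mZtG]) ω i)
            * ((μ[U|mZtG]) ω i - (μ[U|mZt]) ω i) := by
      funext ω
      rw [Finset.sum_apply, PiLp.inner_apply]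
      refine Finset.sum_congr rfl fun i _ => ?_
      simp [RCLike.inner_apply, mul_comm]
    rw [hsum]
    have hcs := condExp_finsetSum (μ := μ) (m := mZt)
      (f := fun (i : Fin d) ω => (U ω i - (μ[U|mZtG]) ω i)
        * ((μ[U|mZtG]) ω i - (μ[U|mZt]) ω i)) (s := Finset.univ)
      (fun i _ => aux_integrable_mul ((hUi2 i).sub (hEUi2 i)) ((hEUi2 i).sub (hEUmi2 i)))
    have hall : ∀ᵐ ω ∂μ, ∀ i : Fin d, (μ[(fun ω => (U ω i - (μ[U|mZtG]) ω i)
        * ((μ[U|mZtG]) ω i - (μ[U|mZt]) ω i))|mZt]) ω = 0 := by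
      rw [ae_all_iff]
      intro i
      filter_upwards [hterm i] with ω hω
      simpa using hω
    filter_upwards [hcs, hall] with ω h1 h2
    rw [h1, Finset.sum_apply]
    simp only [Pi.zero_apply]
    exact Finset.sum_eq_zero fun i _ => h2 i
  have hXchain : μ[(fun ω => ‖U ω - (μ[U|mZtG]) ω‖ ^ 2)|mZt]
      =ᵐ[μ] μ[μ[(fun ω' => ‖Δ ω' - (μ[Δ|mZtil]) ω'‖ ^ 2)|mZtil]|mZt] := by
    calc μ[(fun ω => ‖U ω - (μ[U|mZtG]) ω‖ ^ 2)|mZt]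
        =ᵐ[μ] μ[(fun ω => ‖Δ ω - (μ[Δ|mZtil]) ω‖ ^ 2)|mZt] := condExp_congr_ae hCsq
      _ =ᵐ[μ] μ[μ[(fun ω => ‖Δ ω - (μ[Δ|mZtil]) ω‖ ^ 2)|mZtG]|mZt] :=
          (condExp_condExp_of_le hmZtG' hmG0).symm
      _ =ᵐ[μ] μ[μ[(fun ω => ‖Δ ω - (μ[Δ|mZtil]) ω‖ ^ 2)|mZtil]|mZt] := condExp_congr_ae hE
  have h2ip : μ[(fun ω => (2 : ℝ) * (inner ℝ (U ω - (μ[U|mZtG]) ω)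
      ((μ[U|mZtG]) ω - (μ[U|mZt]) ω) : ℝ))|mZt] =ᵐ[μ] 0 := by
    have hs := condExp_smul (μ := μ) (m := mZt) (2 : ℝ)
      (fun ω => (inner ℝ (U ω - (μ[U|mZtG]) ω) ((μ[U|mZtG]) ω - (μ[U|mZt]) ω) : ℝ))
    have h0 : (fun ω => (2 : ℝ) * (inner ℝ (U ω - (μ[U|mZtG]) ω)
        ((μ[U|mZtG]) ω - (μ[U|mZt]) ω) : ℝ))
        = (2 : ℝ) • (fun ω => (inner ℝ (U ω - (μ[U|mZtG]) ω)
          ((μ[U|mZtG]) ω - (μ[U|mZt]) ω) : ℝ)) := by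
      funext ω; simp [smul_eq_mul]
    rw [h0]
    refine hs.trans ?_
    filter_upwards [hIP] with ω hω
    simp only [Pi.smul_apply, Pi.zero_apply, smul_eq_mul] at *
    rw [hω, mul_zero]
  have hsplit : (fun ω => ‖U ω - (μ[U|mZt]) ω‖ ^ 2) = (fun ω => ‖U ω - (μ[U|mZtG]) ω‖ ^ 2)
      + ((fun ω => (2 : ℝ) * (inner ℝ (U ω - (μ[U|mZtG]) ω)
          ((μ[U|mZtG]) ω - (μ[U|mZt]) ω) : ℝ))
        + fun ω => ‖(μ[U|mZtG]) ω - (μ[U|mZt]) ω‖ ^ 2) := by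
    funext ω
    simp only [Pi.add_apply]
    have h4 : U ω - (μ[U|mZt]) ω
        = (U ω - (μ[U|mZtG]) ω) + ((μ[U|mZtG]) ω - (μ[U|mZt]) ω) :=
      (sub_add_sub_cancel _ _ _).symm
    rw [h4, norm_add_sq_real]
    ring
  have hadd1 := condExp_add (μ := μ) (m := mZt) hAsqint ((hipint.const_mul 2).add hBsqint)
  have hadd2 := condExp_add (μ := μ) (m := mZt) (hipint.const_mul 2) hBsqint
  have hmain : μ[(fun ω => ‖U ω - (μ[U|mZt]) ω‖ ^ 2)|mZt]
      =ᵐ[μ] fun ω => (μ[μ[(fun ω' => ‖Δ ω' - (μ[Δ|mZtil]) ω'‖ ^ 2)|mZtil]|mZt]) ω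
        + (μ[(fun ω' => ‖(μ[U|mZtG]) ω' - (μ[U|mZt]) ω'‖ ^ 2)|mZt]) ω := by
    rw [hsplit]
    filter_upwards [hadd1, hadd2, hXchain, h2ip] with ω e1 e2 e3 e4
    rw [e1]
    simp only [Pi.add_apply, Pi.zero_apply] at *
    rw [e2, e3, e4]
    ring
  refine ⟨hmain, ?_⟩
  calc ∫ ω, ‖Δ ω - (μ[Δ|mZtil]) ω‖ ^ 2 ∂μ
      = ∫ ω, (μ[(fun ω' => ‖Δ ω' - (μ[Δ|mZtil]) ω'‖ ^ 2)|mZtil]) ω ∂μ :=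
        (integral_condExp hmT0).symm
    _ = ∫ ω, (μ[μ[(fun ω' => ‖Δ ω' - (μ[Δ|mZtil]) ω'‖ ^ 2)|mZtil]|mZt]) ω ∂μ :=
        (integral_condExp hmZt0').symm
    _ ≤ ∫ ω, ((μ[μ[(fun ω' => ‖Δ ω' - (μ[Δ|mZtil]) ω'‖ ^ 2)|mZtil]|mZt]) ω
          + (μ[(fun ω' => ‖(μ[U|mZtG]) ω' - (μ[U|mZt]) ω'‖ ^ 2)|mZt]) ω) ∂μ := by
        rw [integral_add integrable_condExp integrable_condExp]
        have h5 : 0 ≤ ∫ ω, (μ[(fun ω' => ‖(μ[U|mZtG]) ω' - (μ[U|mZt]) ω'‖ ^ 2)|mZt]) ω ∂μ :=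
          integral_nonneg_of_ae (condExp_nonneg
            (Filter.Eventually.of_forall fun ω => by positivity))
        linarith
    _ = ∫ ω, (μ[(fun ω' => ‖U ω' - (μ[U|mZt]) ω'‖ ^ 2)|mZt]) ω ∂μ :=
        (integral_congr_ae hmain).symm
    _ = ∫ ω, ‖U ω - (μ[U|mZt]) ω‖ ^ 2 ∂μ := integral_condExp hmZt0'
end

section
/- Let a group G act measurably and orthogonally on ℝ^d, and let (Z, U) be a pair of square-integrable ℝ^d-valued random vectors whose joint law is diagonal-invariant: (g·Z, g·U) has the same law as (Z, U) for every g ∈ G. Then the conditional expectation v*(z) = E[U | Z = z] is G-equivariant: v*(g·z) = g·v*(z) for (law of Z)-almost every z and every g ∈ G. -/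
open MeasureTheory

private lemma stmt17_aux {Ω : Type*} [MeasurableSpace Ω] {μ : Measure Ω} {d : ℕ}
    (X Y X' Y' : Ω → EuclideanSpace ℝ (Fin d))
    (hX : Measurable X) (hY : Measurable Y) (hX' : Measurable X') (hY' : Measurable Y')
    (hlaw : Measure.map (fun ω => (X ω, Y ω)) μ = Measure.map (fun ω => (X' ω, Y' ω)) μ)
    {A : Set (EuclideanSpace ℝ (Fin d))} (hA : MeasurableSet A) :
    ∫ ω in X ⁻¹' A, Y ω ∂μ = ∫ ω in X' ⁻¹' A, Y' ω ∂μ := by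
  set F : EuclideanSpace ℝ (Fin d) × EuclideanSpace ℝ (Fin d) → EuclideanSpace ℝ (Fin d) :=
    fun p => Set.indicator A (fun _ => (1 : ℝ)) p.1 • p.2 with hF
  have hFmeas : Measurable F := by
    have h1 : Measurable fun p : EuclideanSpace ℝ (Fin d) × EuclideanSpace ℝ (Fin d) =>
        Set.indicator A (fun _ => (1 : ℝ)) p.1 :=
      (measurable_const.indicator hA).comp measurable_fst
    exact h1.smul measurable_snd
  have hkey : ∀ (X₀ Y₀ : Ω → EuclideanSpace ℝ (Fin d)), Measurable X₀ → Measurable Y₀ →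
      ∫ ω in X₀ ⁻¹' A, Y₀ ω ∂μ
        = ∫ p, F p ∂(Measure.map (fun ω => (X₀ ω, Y₀ ω)) μ) := by
    intro X₀ Y₀ hX₀ hY₀
    rw [integral_map (hX₀.prodMk hY₀).aemeasurable hFmeas.aestronglyMeasurable,
      ← integral_indicator (hX₀ hA)]
    congr 1
    funext ω
    by_cases h : X₀ ω ∈ A
    · simp [hF, Set.indicator_of_mem, h, Set.indicator_of_mem (show ω ∈ X₀ ⁻¹' A from h)]
    · simp [hF, Set.indicator_of_notMem, h,
        Set.indicator_of_notMem (show ω ∉ X₀ ⁻¹' A from h)]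
  rw [hkey X Y hX hY, hkey X' Y' hX' hY', hlaw]

set_option maxHeartbeats 1000000 in
/-- if the joint law of `(Z, U)` is invariant under the diagonal
orthogonal action of a group `𝒢` (acting through linear isometries `ρ`), then
any version `v` of the conditional expectation `E[U | Z = ·]` is
`𝒢`-equivariant almost everywhere w.r.t. the law of `Z`. -/
theorem stmt17 {Ω : Type*} [MeasurableSpace Ω] (μ : Measure Ω) [IsProbabilityMeasure μ]
    {d : ℕ} {𝒢 : Type*} [Group 𝒢]
    (ρ : 𝒢 →* (EuclideanSpace ℝ (Fin d) ≃ₗᵢ[ℝ] EuclideanSpace ℝ (Fin d)))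
    (Z U : Ω → EuclideanSpace ℝ (Fin d))
    (hZmeas : Measurable Z) (hUmeas : Measurable U)
    (hZ : MemLp Z 2 μ) (hU : MemLp U 2 μ)
    (hdiag : ∀ g : 𝒢,
      Measure.map (fun ω => (ρ g (Z ω), ρ g (U ω))) μ
        = Measure.map (fun ω => (Z ω, U ω)) μ)
    (v : EuclideanSpace ℝ (Fin d) → EuclideanSpace ℝ (Fin d)) (hvmeas : Measurable v)
    (hvint : Integrable (fun ω => v (Z ω)) μ)
    (hv : ∀ A : Set (EuclideanSpace ℝ (Fin d)), MeasurableSet A →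
      ∫ ω in Z ⁻¹' A, U ω ∂μ = ∫ ω in Z ⁻¹' A, v (Z ω) ∂μ) :
    ∀ g : 𝒢, ∀ᵐ z ∂(Measure.map Z μ), v (ρ g z) = ρ g (v z) := by
  intro g
  set T : EuclideanSpace ℝ (Fin d) ≃ₗᵢ[ℝ] EuclideanSpace ℝ (Fin d) := ρ g with hTdef
  set ν : Measure (EuclideanSpace ℝ (Fin d)) := Measure.map Z μ with hνdef
  have hρmeas : ∀ h : 𝒢, Measurable (ρ h : EuclideanSpace ℝ (Fin d) → EuclideanSpace ℝ (Fin d)) :=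
    fun h => (ρ h).continuous.measurable
  have hρinv : (ρ g⁻¹ : EuclideanSpace ℝ (Fin d) → EuclideanSpace ℝ (Fin d)) = T.symm := by
    rw [hTdef, map_inv]; rfl
  -- marginal invariance of the law of Z
  have hinv : ∀ h : 𝒢, Measure.map (fun ω => ρ h (Z ω)) μ = ν := by
    intro h
    have h1 := congrArg (Measure.map Prod.fst) (hdiag h)
    have hm1 : Measurable (fun ω => ((ρ h) (Z ω), (ρ h) (U ω))) :=
      ((hρmeas h).comp hZmeas).prodMk ((hρmeas h).comp hUmeas)
    have hm2 : Measurable (fun ω => (Z ω, U ω)) := hZmeas.prodMk hUmeas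
    rwa [Measure.map_map measurable_fst hm1, Measure.map_map measurable_fst hm2] at h1
  have hνprob : IsProbabilityMeasure ν := Measure.isProbabilityMeasure_map hZmeas.aemeasurable
  -- ν is invariant under T.symm
  have hνTsymm : Measure.map (⇑T.symm) ν = ν := by
    rw [hνdef, Measure.map_map T.symm.continuous.measurable hZmeas]
    have h2 : (⇑T.symm ∘ Z) = fun ω => ρ g⁻¹ (Z ω) := by
      funext ω; rw [hρinv]; rfl
    rw [h2, hinv g⁻¹]
  -- integrability of v and v ∘ T w.r.t. ν
  have hvν : Integrable v ν :=
    (integrable_map_measure hvmeas.aestronglyMeasurable hZmeas.aemeasurable).mpr hvint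
  have hvTν : Integrable (fun z => v (T z)) ν := by
    have h1 : Measure.map (⇑T) ν = ν := by
      rw [hνdef, Measure.map_map T.continuous.measurable hZmeas]
      exact hinv g
    have h2 : Integrable v (Measure.map (⇑T) ν) := h1.symm ▸ hvν
    exact (integrable_map_measure hvmeas.aestronglyMeasurable
      T.continuous.measurable.aemeasurable).mp h2
  have hTvν : Integrable (fun z => T (v z)) ν :=
    T.toLinearIsometry.toContinuousLinearMap.integrable_comp hvν
  -- main set-integral identity
  have hset : ∀ A : Set (EuclideanSpace ℝ (Fin d)), MeasurableSet A →
      ∫ z in A, v (T z) ∂ν = ∫ z in A, T (v z) ∂ν := by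
    intro A hA
    have hB : MeasurableSet (⇑T.symm ⁻¹' A) := T.symm.continuous.measurable hA
    calc ∫ z in A, v (T z) ∂ν
        = ∫ x in ⇑T.symm ⁻¹' A, v (T (T.symm x)) ∂ν := by
          conv_lhs => rw [← hνTsymm]
          exact setIntegral_map hA
            (by rw [hνTsymm]
                exact (hvmeas.comp T.continuous.measurable).aestronglyMeasurable)
            T.symm.continuous.measurable.aemeasurable
      _ = ∫ x in ⇑T.symm ⁻¹' A, v x ∂ν := by
          apply setIntegral_congr_fun hB
          intro x _
          show v (T (T.symm x)) = v x
          rw [LinearIsometryEquiv.apply_symm_apply]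
      _ = ∫ ω in Z ⁻¹' (⇑T.symm ⁻¹' A), v (Z ω) ∂μ :=
          setIntegral_map hB hvmeas.aestronglyMeasurable hZmeas.aemeasurable
      _ = ∫ ω in Z ⁻¹' (⇑T.symm ⁻¹' A), U ω ∂μ := (hv _ hB).symm
      _ = ∫ ω in (fun ω => T.symm (Z ω)) ⁻¹' A, T (T.symm (U ω)) ∂μ := by
          apply setIntegral_congr_fun (hZmeas hB)
          intro ω _
          show U ω = T (T.symm (U ω))
          rw [LinearIsometryEquiv.apply_symm_apply]
      _ = T (∫ ω in (fun ω => T.symm (Z ω)) ⁻¹' A, T.symm (U ω) ∂μ) :=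
          T.toLinearIsometry.integral_comp_comm _
      _ = T (∫ ω in Z ⁻¹' A, U ω ∂μ) := by
          congr 1
          have hlaw : Measure.map (fun ω => (T.symm (Z ω), T.symm (U ω))) μ
              = Measure.map (fun ω => (Z ω, U ω)) μ := by
            have h3 := hdiag g⁻¹
            simp only [hρinv] at h3
            exact h3
          exact stmt17_aux _ _ _ _ (T.symm.continuous.measurable.comp hZmeas)
            (T.symm.continuous.measurable.comp hUmeas) hZmeas hUmeas hlaw hA
      _ = T (∫ ω in Z ⁻¹' A, v (Z ω) ∂μ) := by rw [hv A hA]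
      _ = T (∫ z in A, v z ∂ν) := by
          rw [setIntegral_map hA hvmeas.aestronglyMeasurable hZmeas.aemeasurable]
      _ = ∫ z in A, T (v z) ∂ν := (T.toLinearIsometry.integral_comp_comm _).symm
  exact ae_eq_of_forall_setIntegral_eq_of_sigmaFinite
    (fun s hs _ => hvTν.integrableOn)
    (fun s hs _ => hTvν.integrableOn)
    (fun s hs _ => hset s hs)
end
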